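/- For any integer a ≥ 1, Σ_{t=0}^{a} C(a,t) · m_{a−1,t−1} ≤ H_a, where m_{s,t} = ∫_0^1 (e^p/(e−1)) p^t (1−p)^{s−t} dp (with the convention that terms with t = 0 use m_{a−1,−1} = 0 or are interpreted via the definition of the auxiliary function), and H_a = Σ_{i=1}^{a} 1/i is the a-th harmonic number. -/

import Mathlib

open Finset intervalIntegral Real

private lemma int_one_sub_pow (k : ℕ) :
    (∫ p in (0:ℝ)..1, (1 - p) ^ k) = 1 / (k + 1) := by
  have h := intervalIntegral.integral_comp_sub_left (a := (0:ℝ)) (b := 1)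
      (fun x : ℝ => x ^ k) 1
  simp only [sub_self, sub_zero] at h
  rw [show (fun p : ℝ => (1 - p) ^ k) = fun p : ℝ => (fun x : ℝ => x ^ k) (1 - p) from rfl]
  rw [h, integral_pow]
  simp

private lemma exp_le_lin {p : ℝ} (h0 : 0 ≤ p) (h1 : p ≤ 1) :
    Real.exp p ≤ 1 + (Real.exp 1 - 1) * p := by
  have h := convexOn_exp.2 (Set.mem_univ (0:ℝ)) (Set.mem_univ (1:ℝ))
      (by linarith : (0:ℝ) ≤ 1 - p) h0 (by ring)
  simp only [smul_eq_mul, mul_zero, mul_one, Real.exp_zero, zero_add] at h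
  linarith

private lemma int_mul_one_sub_pow (k : ℕ) :
    (∫ p in (0:ℝ)..1, p * (1 - p) ^ k) = 1 / (k + 1) - 1 / (k + 2) := by
  have heq : ∀ p ∈ Set.uIcc (0:ℝ) 1,
      p * (1 - p) ^ k = (1 - p) ^ k - (1 - p) ^ (k + 1) := by
    intro p _; ring
  rw [intervalIntegral.integral_congr heq, intervalIntegral.integral_sub
      ((by fun_prop : Continuous fun p : ℝ => (1 - p) ^ k).intervalIntegrable _ _)
      ((by fun_prop : Continuous fun p : ℝ => (1 - p) ^ (k + 1)).intervalIntegrable _ _),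
    int_one_sub_pow, int_one_sub_pow]
  push_cast; ring

private lemma J_le (k : ℕ) :
    (∫ p in (0:ℝ)..1, Real.exp p * (1 - p) ^ k) ≤ (Real.exp 1 - 1) / (k + 1) := by
  rcases Nat.eq_zero_or_pos k with rfl | hk
  · simp [integral_exp]
  · have step1 : (∫ p in (0:ℝ)..1, Real.exp p * (1 - p) ^ k)
        ≤ ∫ p in (0:ℝ)..1, (1 + (Real.exp 1 - 1) * p) * (1 - p) ^ k := by
      apply intervalIntegral.integral_mono_on (by norm_num)
        ((by fun_prop : Continuous fun p : ℝ => Real.exp p * (1 - p) ^ k).intervalIntegrable _ _)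
        ((by fun_prop : Continuous fun p : ℝ =>
          (1 + (Real.exp 1 - 1) * p) * (1 - p) ^ k).intervalIntegrable _ _)
      intro p hp
      have hnn : (0:ℝ) ≤ (1 - p) ^ k := pow_nonneg (by linarith [hp.2]) _
      exact mul_le_mul_of_nonneg_right (exp_le_lin hp.1 hp.2) hnn
    have step2 : (∫ p in (0:ℝ)..1, (1 + (Real.exp 1 - 1) * p) * (1 - p) ^ k)
        = 1 / (k + 1) + (Real.exp 1 - 1) * (1 / (k + 1) - 1 / (k + 2)) := by
      have heq : ∀ p ∈ Set.uIcc (0:ℝ) 1,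
          (1 + (Real.exp 1 - 1) * p) * (1 - p) ^ k
            = (1 - p) ^ k + (Real.exp 1 - 1) * (p * (1 - p) ^ k) := by
        intro p _; ring
      rw [intervalIntegral.integral_congr heq, intervalIntegral.integral_add
          ((by fun_prop : Continuous fun p : ℝ => (1 - p) ^ k).intervalIntegrable _ _)
          ((by fun_prop : Continuous fun p : ℝ =>
            (Real.exp 1 - 1) * (p * (1 - p) ^ k)).intervalIntegrable _ _),
        intervalIntegral.integral_const_mul, int_one_sub_pow, int_mul_one_sub_pow]
    rw [step2] at step1
    refine step1.trans ?_
    have hk1 : (1:ℝ) ≤ (k:ℝ) := by exact_mod_cast hk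
    have he : (2.7:ℝ) < Real.exp 1 := by
      have := Real.exp_one_gt_d9; linarith
    have h1 : (0:ℝ) < (k:ℝ) + 1 := by linarith
    have h2 : (0:ℝ) < (k:ℝ) + 2 := by linarith
    rw [← sub_nonneg]
    have hrw : (Real.exp 1 - 1) / ((k:ℝ) + 1)
        - (1 / ((k:ℝ) + 1) + (Real.exp 1 - 1) * (1 / ((k:ℝ) + 1) - 1 / ((k:ℝ) + 2)))
        = ((Real.exp 1 - 2) * (k:ℝ) + (Real.exp 1 - 3)) / (((k:ℝ) + 1) * ((k:ℝ) + 2)) := by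
      field_simp
      ring
    rw [hrw]
    apply div_nonneg _ (by positivity)
    nlinarith

private lemma binom_id (a : ℕ) (ha : 1 ≤ a) (p : ℝ) :
    ∑ t ∈ Finset.range a, (a.choose (t + 1) : ℝ) * p ^ t * (1 - p) ^ (a - 1 - t)
      = ∑ k ∈ Finset.range a, (1 - p) ^ k := by
  rcases eq_or_ne p 0 with rfl | hp
  · simp only [sub_zero, one_pow, mul_one]
    rw [Finset.sum_eq_single 0 (by intro t _ ht; simp [zero_pow ht]) (by
      intro h; exact absurd (Finset.mem_range.2 ha) h)]
    simp [ha]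
  · apply mul_left_cancel₀ hp
    have hgeom := geom_sum_mul (1 - p) a
    have hrhs : p * ∑ k ∈ Finset.range a, (1 - p) ^ k = 1 - (1 - p) ^ a := by
      have : (1 - p) - 1 = -p := by ring
      rw [this] at hgeom
      linarith [hgeom]
    rw [hrhs]
    have hbin := add_pow p (1 - p) a
    rw [show p + (1 - p) = 1 by ring, one_pow] at hbin
    rw [Finset.sum_range_succ'] at hbin
    simp only [pow_zero, Nat.choose_zero_right, Nat.cast_one, one_mul, mul_one,
      Nat.sub_zero] at hbin
    rw [Finset.mul_sum]
    have : ∀ t ∈ Finset.range a,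
        p * ((a.choose (t + 1) : ℝ) * p ^ t * (1 - p) ^ (a - 1 - t))
          = p ^ (t + 1) * (1 - p) ^ (a - (t + 1)) * (a.choose (t + 1) : ℝ) := by
      intro t ht
      rw [show a - 1 - t = a - (t + 1) by omega]
      ring
    rw [Finset.sum_congr rfl this]
    linarith [hbin]

/-- For any integer `a ≥ 1`,
`∑_{t=0}^{a} C(a,t) · m_{a-1,t-1} ≤ H_a`, where the `t = 0` term is `0` by convention
and `H_a = ∑_{i=1}^a 1/i`. -/
theorem stmt_9 (a : ℕ) (ha : 1 ≤ a) :
    (∑ t ∈ Finset.range (a + 1),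
      (if t = 0 then (0 : ℝ) else (a.choose t : ℝ) *
        ∫ p in (0:ℝ)..1, Real.exp p / (Real.exp 1 - 1) * p ^ (t - 1) * (1 - p) ^ ((a - 1) - (t - 1))))
      ≤ ∑ i ∈ Finset.range a, (1 : ℝ) / (i + 1) := by
  set E := Real.exp 1 - 1 with hEdef
  have hE : 0 < E := by rw [hEdef]; have := Real.exp_one_gt_d9; linarith
  rw [Finset.sum_range_succ']
  simp only [if_pos rfl, add_zero, Nat.succ_ne_zero, if_neg, Nat.add_sub_cancel,
    reduceIte]
  have hint : ∀ t : ℕ,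
      (∫ p in (0:ℝ)..1, Real.exp p / E * p ^ t * (1 - p) ^ (a - 1 - t))
        = E⁻¹ * ∫ p in (0:ℝ)..1, Real.exp p * (p ^ t * (1 - p) ^ (a - 1 - t)) := by
    intro t
    rw [← intervalIntegral.integral_const_mul]
    apply intervalIntegral.integral_congr
    intro p _
    field_simp
  calc ∑ t ∈ Finset.range a, ((a.choose (t + 1) : ℝ) *
          ∫ p in (0:ℝ)..1, Real.exp p / E * p ^ t * (1 - p) ^ (a - 1 - t))
      = E⁻¹ * ∑ t ∈ Finset.range a,
          ∫ p in (0:ℝ)..1, (a.choose (t + 1) : ℝ)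
            * (Real.exp p * (p ^ t * (1 - p) ^ (a - 1 - t))) := by
        rw [Finset.mul_sum]
        refine Finset.sum_congr rfl fun t _ => ?_
        rw [hint t, intervalIntegral.integral_const_mul]
        ring
    _ = E⁻¹ * ∫ p in (0:ℝ)..1, ∑ t ∈ Finset.range a,
          (a.choose (t + 1) : ℝ) * (Real.exp p * (p ^ t * (1 - p) ^ (a - 1 - t))) := by
        rw [intervalIntegral.integral_finset_sum]
        intro t _
        exact (by fun_prop : Continuous fun p : ℝ =>
          (a.choose (t + 1) : ℝ)
            * (Real.exp p * (p ^ t * (1 - p) ^ (a - 1 - t)))).intervalIntegrable _ _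
    _ = E⁻¹ * ∑ k ∈ Finset.range a, ∫ p in (0:ℝ)..1, Real.exp p * (1 - p) ^ k := by
        congr 1
        rw [← intervalIntegral.integral_finset_sum (fun k _ =>
          (by fun_prop : Continuous fun p : ℝ =>
            Real.exp p * (1 - p) ^ k).intervalIntegrable _ _)]
        apply intervalIntegral.integral_congr
        intro p _
        have hb := binom_id a ha p
        calc ∑ t ∈ Finset.range a, (a.choose (t + 1) : ℝ)
              * (Real.exp p * (p ^ t * (1 - p) ^ (a - 1 - t)))
            = Real.exp p * ∑ t ∈ Finset.range a,
                (a.choose (t + 1) : ℝ) * p ^ t * (1 - p) ^ (a - 1 - t) := by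
              rw [Finset.mul_sum]; refine Finset.sum_congr rfl fun t _ => by ring
          _ = Real.exp p * ∑ k ∈ Finset.range a, (1 - p) ^ k := by rw [hb]
          _ = ∑ k ∈ Finset.range a, Real.exp p * (1 - p) ^ k := by rw [Finset.mul_sum]
    _ ≤ E⁻¹ * ∑ k ∈ Finset.range a, E / (k + 1) := by
        apply mul_le_mul_of_nonneg_left _ (le_of_lt (inv_pos.2 hE))
        exact Finset.sum_le_sum fun k _ => J_le k
    _ = ∑ i ∈ Finset.range a, (1 : ℝ) / (i + 1) := by
        rw [Finset.mul_sum]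
        refine Finset.sum_congr rfl fun k _ => ?_
        field_simp
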